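/- Let n ≥ 2, α > 1, q > 2̃_α, ψ a model function with κ₁ r^α ≤ ψ(r) ≤ κ₂ r^α for large r, and u a global positive decreasing solution of -(ψ^{n-1}u')' = ψ^{n-1}u^q with u(r) ≤ C(r+1)^{-2/(q-1)}. Then |u'(r)| ≤ C'(r+1)^{-2/(q-1)-1} for all r ≥ 0, for some C' > 0. -/

import Mathlib

open Set Filter Topology

set_option maxHeartbeats 1000000 in
/-- Gradient decay (Lemma 4.2, second half): under the same hypotheses, if moreover
`u` is decreasing and `u(r) ≤ C (r+1)^{-2/(q-1)}`, then
`|u'(r)| ≤ C' (r+1)^{-2/(q-1)-1}`. -/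
theorem gradient_decay (n : ℕ) (hn : 2 ≤ n) (α : ℝ) (hα : 1 < α)
    (q : ℝ) (hq : (α * (n - 1) + 1) / (α * (n - 1) - 1) < q)
    (ψ : ℝ → ℝ)
    (hψcont : ContinuousOn ψ (Ici 0))
    (hψC1 : ContDiffOn ℝ 1 ψ (Ioi 0))
    (hψpos : ∀ r > (0:ℝ), 0 < ψ r)
    (hψ0 : Tendsto (fun r => ψ r / r) (nhdsWithin 0 (Ioi 0)) (nhds 1))
    (κ₁ κ₂ R : ℝ) (hκ₁ : 0 < κ₁) (hκ₂ : 0 < κ₂) (hR : 0 < R)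
    (hψinf : ∀ r ≥ R, κ₁ * r ^ α ≤ ψ r ∧ ψ r ≤ κ₂ * r ^ α)
    (u : ℝ → ℝ) (hu : ContDiff ℝ 2 u)
    (hupos : ∀ r : ℝ, 0 ≤ r → 0 < u r)
    (hu'0 : deriv u 0 = 0)
    (hdec : AntitoneOn u (Ici 0))
    (heq : ∀ r > (0:ℝ),
      -deriv (fun s => ψ s ^ (n - 1) * deriv u s) r = ψ r ^ (n - 1) * u r ^ q)
    (C : ℝ) (hC : 0 < C)
    (hdecay : ∀ r ≥ (0:ℝ), u r ≤ C * (r + 1) ^ (-(2 / (q - 1)))) :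
    ∃ C' > (0:ℝ), ∀ r ≥ (0:ℝ),
      |deriv u r| ≤ C' * (r + 1) ^ (-(2 / (q - 1)) - 1) := by
  have hn1 : (2:ℝ) ≤ (n:ℝ) := by exact_mod_cast hn
  set X : ℝ := α * ((n:ℝ) - 1) with hXdef
  have hX1 : 1 < X := by nlinarith
  have hq1 : 1 < q := lt_trans (by rw [lt_div_iff₀ (by linarith)]; linarith) hq
  have hq1' : (0:ℝ) < q - 1 := by linarith
  set e : ℝ := 2 / (q - 1) with hedef
  have he : 0 < e := by positivity
  have heq2 : e * q = e + 2 := by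
    rw [hedef]; field_simp; ring
  have hkey : e + 1 < X := by
    have h1 : X + 1 < q * (X - 1) := (div_lt_iff₀ (by linarith)).1 hq
    have h2 : 2 < (X - 1) * (q - 1) := by nlinarith
    have h3 : e < X - 1 := by rw [hedef, div_lt_iff₀ hq1']; linarith
    linarith
  set m : ℕ := n - 1 with hm
  have hmcast : ((m:ℕ) : ℝ) = (n:ℝ) - 1 := by
    rw [hm, Nat.cast_sub (by omega)]; norm_num
  -- regularity of u
  have hu2 : ContDiff ℝ ((1:WithTop ℕ∞)+1) u := by
    have : ((1:WithTop ℕ∞)+1) = 2 := by norm_num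
    rw [this]; exact hu
  have hu' : ContDiff ℝ 1 (deriv u) := (contDiff_succ_iff_deriv.1 hu2).2.2
  have udiff : Differentiable ℝ u := (contDiff_succ_iff_deriv.1 hu2).1
  have hu'diff : Differentiable ℝ (deriv u) := hu'.differentiable one_ne_zero
  have hu'cont : Continuous (deriv u) := hu'.continuous
  -- deriv u ≤ 0 on Ici 0
  have hderiv_nonpos : ∀ r : ℝ, 0 ≤ r → deriv u r ≤ 0 := by
    intro r hr
    have hd : HasDerivAt u (deriv u r) r := (udiff r).hasDerivAt
    have ht := hasDerivAt_iff_tendsto_slope.1 hd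
    have hmono : 𝓝[>] r ≤ 𝓝[≠] r :=
      nhdsWithin_mono _ (fun y hy => ne_of_gt hy)
    have hslope : ∀ᶠ y in 𝓝[>] r, slope u r y ≤ 0 := by
      filter_upwards [self_mem_nhdsWithin] with y (hy : r < y)
      have huy : u y ≤ u r := hdec (mem_Ici.2 hr) (mem_Ici.2 (by linarith)) hy.le
      rw [slope_def_field]
      apply div_nonpos_of_nonpos_of_nonneg <;> linarith
    exact le_of_tendsto (ht.mono_left hmono) hslope
  -- ψ and g differentiability
  have hψdiff : ∀ s > (0:ℝ), DifferentiableAt ℝ ψ s := fun s hs =>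
    (hψC1.contDiffAt (Ioi_mem_nhds hs)).differentiableAt one_ne_zero
  set g : ℝ → ℝ := fun s => ψ s ^ m * deriv u s with hg
  have hgdiff : ∀ s > (0:ℝ), DifferentiableAt ℝ g s := fun s hs =>
    ((hψdiff s hs).pow m).mul (hu'diff s)
  set R₀ : ℝ := max R 1 with hR₀
  have hR₀pos : (0:ℝ) < R₀ := lt_of_lt_of_le one_pos (le_max_right _ _)
  have hR₀R : R ≤ R₀ := le_max_left _ _
  have hR₀1 : (1:ℝ) ≤ R₀ := le_max_right _ _
  -- continuity of integrand
  have hFcont : ∀ r : ℝ, ContinuousOn (fun s => ψ s ^ m * u s ^ q) (Icc R₀ r) := by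
    intro r
    have hsub : Icc R₀ r ⊆ Ici (0:ℝ) := fun s hs => le_trans hR₀pos.le hs.1
    exact ((hψcont.mono hsub).pow m).mul
      ((hu.continuous.continuousOn).rpow_const
        (fun s hs => Or.inl (ne_of_gt (hupos s (hsub hs)))))
  -- FTC
  have hmain : ∀ r, R₀ ≤ r → g R₀ - g r = ∫ s in R₀..r, ψ s ^ m * u s ^ q := by
    intro r hr
    have h1 : ∀ s ∈ uIcc R₀ r, HasDerivAt g (-(ψ s ^ m * u s ^ q)) s := by
      intro s hs
      rw [uIcc_of_le hr] at hs
      have hs0 : 0 < s := lt_of_lt_of_le hR₀pos hs.1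
      have hd := (hgdiff s hs0).hasDerivAt
      have := heq s hs0
      rwa [show deriv g s = -(ψ s ^ m * u s ^ q) by rw [← this]; ring] at hd
    have h2 : IntervalIntegrable (fun s => -(ψ s ^ m * u s ^ q)) MeasureTheory.volume R₀ r := by
      apply ContinuousOn.intervalIntegrable
      rw [uIcc_of_le hr]
      exact (hFcont r).neg
    have h3 := intervalIntegral.integral_eq_sub_of_hasDerivAt h1 h2
    rw [intervalIntegral.integral_neg] at h3
    linarith [h3]
  set K : ℝ := κ₂ ^ m * C ^ q with hK
  have hKpos : 0 < K := by
    apply mul_pos (pow_pos hκ₂ m) (Real.rpow_pos_of_pos hC q)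
  set β : ℝ := X - e * q with hβ
  have hβ1 : 0 < β + 1 := by rw [hβ, heq2]; linarith
  have hβX : β + 1 - X = -e - 1 := by rw [hβ, heq2]; ring
  -- pointwise bound for the integrand
  have hbound : ∀ s : ℝ, R₀ ≤ s → ψ s ^ m * u s ^ q ≤ K * (s+1) ^ β := by
    intro s hs
    have hs0 : (0:ℝ) < s := lt_of_lt_of_le hR₀pos hs
    have hs1 : (0:ℝ) < s + 1 := by linarith
    have hψs := hψinf s (le_trans hR₀R hs)
    have hψm : ψ s ^ m ≤ κ₂ ^ m * (s+1) ^ X := by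
      calc ψ s ^ m ≤ (κ₂ * s ^ α) ^ m :=
            pow_le_pow_left₀ (hψpos s hs0).le hψs.2 m
        _ = κ₂ ^ m * (s ^ α) ^ m := mul_pow _ _ _
        _ = κ₂ ^ m * s ^ X := by
            rw [← Real.rpow_natCast (s ^ α) m, ← Real.rpow_mul hs0.le, hmcast, hXdef]
        _ ≤ κ₂ ^ m * (s+1) ^ X := by
            have : s ^ X ≤ (s+1) ^ X :=
              Real.rpow_le_rpow hs0.le (by linarith) (by linarith)
            nlinarith [pow_pos hκ₂ m]
    have hum : u s ^ q ≤ C ^ q * (s+1) ^ (-(e*q)) := by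
      have h1 : u s ^ q ≤ (C * (s+1) ^ (-e)) ^ q :=
        Real.rpow_le_rpow (hupos s hs0.le).le (hdecay s hs0.le) (by linarith)
      calc u s ^ q ≤ (C * (s+1) ^ (-e)) ^ q := h1
        _ = C ^ q * ((s+1) ^ (-e)) ^ q :=
            Real.mul_rpow hC.le (Real.rpow_nonneg hs1.le _)
        _ = C ^ q * (s+1) ^ (-(e*q)) := by
            rw [← Real.rpow_mul hs1.le]; ring_nf
    calc ψ s ^ m * u s ^ q
        ≤ (κ₂ ^ m * (s+1) ^ X) * (C ^ q * (s+1) ^ (-(e*q))) := by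
          apply mul_le_mul hψm hum (Real.rpow_nonneg (hupos s hs0.le).le _)
          positivity
      _ = K * (s+1) ^ β := by
          rw [hK, hβ]
          rw [show (s+1:ℝ) ^ (X - e * q) = (s+1) ^ X * (s+1) ^ (-(e*q)) by
            rw [← Real.rpow_add hs1]; ring_nf]
          ring
  -- integral bound
  have hint : ∀ r, R₀ ≤ r →
      (∫ s in R₀..r, ψ s ^ m * u s ^ q) ≤ (K/(β+1)) * (r+1)^(β+1) := by
    intro r hr
    have hcontβ : ContinuousOn (fun s : ℝ => K * (s+1) ^ β) (Icc R₀ r) := by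
      apply ContinuousOn.mul continuousOn_const
      apply ContinuousOn.rpow_const
      · exact (continuous_id.add continuous_const).continuousOn
      · intro s hs
        exact Or.inl (by have := lt_of_lt_of_le hR₀pos hs.1; positivity)
    have hi1 : IntervalIntegrable (fun s => ψ s ^ m * u s ^ q) MeasureTheory.volume R₀ r := by
      apply ContinuousOn.intervalIntegrable; rw [uIcc_of_le hr]; exact hFcont r
    have hi2 : IntervalIntegrable (fun s : ℝ => K * (s+1) ^ β) MeasureTheory.volume R₀ r := by
      apply ContinuousOn.intervalIntegrable; rw [uIcc_of_le hr]; exact hcontβ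
    have h1 : (∫ s in R₀..r, ψ s ^ m * u s ^ q) ≤ ∫ s in R₀..r, K * (s+1) ^ β :=
      intervalIntegral.integral_mono_on hr hi1 hi2 (fun s hs => hbound s hs.1)
    have h2 : (∫ s in R₀..r, K * (s+1) ^ β)
        = K * (((r+1)^(β+1) - (R₀+1)^(β+1))/(β+1)) := by
      rw [intervalIntegral.integral_const_mul]
      congr 1
      have h3 : (∫ s in R₀..r, (s+1:ℝ) ^ β) = ∫ s in (R₀+1)..(r+1), s ^ β := by
        simpa using intervalIntegral.integral_comp_add_right (fun s : ℝ => s ^ β) 1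
      rw [h3, integral_rpow (Or.inl (by linarith))]
    have hpow0 : (0:ℝ) ≤ (R₀+1)^(β+1) := Real.rpow_nonneg (by linarith) _
    have hKβ : 0 ≤ K/(β+1) := le_of_lt (div_pos hKpos hβ1)
    calc (∫ s in R₀..r, ψ s ^ m * u s ^ q) ≤ ∫ s in R₀..r, K * (s+1) ^ β := h1
      _ = K * (((r+1)^(β+1) - (R₀+1)^(β+1))/(β+1)) := h2
      _ ≤ (K/(β+1)) * (r+1)^(β+1) := by
          have hrw : K * (((r+1)^(β+1) - (R₀+1)^(β+1))/(β+1))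
              = (K/(β+1)) * ((r+1)^(β+1) - (R₀+1)^(β+1)) := by ring
          rw [hrw]
          nlinarith [hpow0, hKβ]
  -- lower bound for ψ r ^ m
  set c : ℝ := κ₁ ^ m / (2:ℝ) ^ X with hc
  have hcpos : 0 < c := div_pos (pow_pos hκ₁ m) (Real.rpow_pos_of_pos two_pos X)
  have hψlow : ∀ r, R₀ ≤ r → c * (r+1) ^ X ≤ ψ r ^ m := by
    intro r hr
    have hr0 : (0:ℝ) < r := lt_of_lt_of_le hR₀pos hr
    have hr1 : (1:ℝ) ≤ r := le_trans hR₀1 hr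
    have hψr := (hψinf r (le_trans hR₀R hr)).1
    have h1 : κ₁ ^ m * r ^ X ≤ ψ r ^ m := by
      calc κ₁ ^ m * r ^ X = κ₁ ^ m * (r ^ α) ^ m := by
            rw [← Real.rpow_natCast (r ^ α) m, ← Real.rpow_mul hr0.le, hmcast, hXdef]
        _ = (κ₁ * r ^ α) ^ m := (mul_pow _ _ _).symm
        _ ≤ ψ r ^ m := pow_le_pow_left₀ (by positivity) hψr m
    have h2 : (r+1) ^ X / (2:ℝ) ^ X ≤ r ^ X := by
      rw [← Real.div_rpow (by linarith) (by norm_num)]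
      exact Real.rpow_le_rpow (by linarith) (by linarith) (by linarith)
    calc c * (r+1) ^ X = κ₁ ^ m * ((r+1)^X / 2 ^ X) := by rw [hc]; ring
      _ ≤ κ₁ ^ m * r ^ X := mul_le_mul_of_nonneg_left h2 (pow_pos hκ₁ m).le
      _ ≤ ψ r ^ m := h1
  set A : ℝ := |g R₀| with hA
  set B : ℝ := K/(β+1) with hB
  have hA0 : 0 ≤ A := abs_nonneg _
  have hBpos : 0 < B := div_pos hKpos hβ1
  set C₁ : ℝ := (A + B) / c with hC₁
  have hfar : ∀ r, R₀ ≤ r → |deriv u r| ≤ C₁ * (r+1) ^ (-e - 1) := by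
    intro r hr
    have hr0 : (0:ℝ) < r := lt_of_lt_of_le hR₀pos hr
    have hr1' : (0:ℝ) < r + 1 := by linarith
    have habs : |deriv u r| = -deriv u r := abs_of_nonpos (hderiv_nonpos r hr0.le)
    have hgr : -g r ≤ A + B * (r+1)^(β+1) := by
      have h1 := hmain r hr
      have h2 := hint r hr
      have h3 : -g R₀ ≤ A := neg_le_abs _
      rw [hB]; linarith
    have hone : (1:ℝ) ≤ (r+1)^(β+1) := Real.one_le_rpow (by linarith) hβ1.le
    have h3 : ψ r ^ m * (-deriv u r) ≤ (A + B) * (r+1)^(β+1) := by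
      have hge : ψ r ^ m * (-deriv u r) = -g r := by rw [hg]; ring
      nlinarith [hgr, hone, hA0]
    have hnn : 0 ≤ -deriv u r := by linarith [hderiv_nonpos r hr0.le]
    have h4 : (c * (r+1)^X) * (-deriv u r) ≤ (A + B) * (r+1)^(β+1) :=
      le_trans (mul_le_mul_of_nonneg_right (hψlow r hr) hnn) h3
    have hcx : 0 < c * (r+1)^X := mul_pos hcpos (Real.rpow_pos_of_pos hr1' X)
    have h5 : -deriv u r ≤ ((A + B) * (r+1)^(β+1)) / (c * (r+1)^X) := by
      rw [le_div_iff₀ hcx, mul_comm]; exact h4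
    have h6 : ((A + B) * (r+1)^(β+1)) / (c * (r+1)^X) = C₁ * (r+1)^(-e-1) := by
      rw [hC₁, ← hβX, Real.rpow_sub hr1']
      field_simp
    rw [habs]
    rw [h6] at h5
    exact h5
  obtain ⟨M, hM⟩ := (isCompact_Icc : IsCompact (Icc (0:ℝ) R₀)).exists_bound_of_continuousOn
      hu'cont.continuousOn
  have hM0 : 0 ≤ M := le_trans (norm_nonneg _) (hM 0 ⟨le_rfl, hR₀pos.le⟩)
  set C₂ : ℝ := M * (R₀+1) ^ (e+1) with hC₂
  have hC₂0 : 0 ≤ C₂ := mul_nonneg hM0 (Real.rpow_nonneg (by linarith) _)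
  have hnear : ∀ r, 0 ≤ r → r ≤ R₀ → |deriv u r| ≤ C₂ * (r+1)^(-e-1) := by
    intro r hr0 hrR
    have h1 : |deriv u r| ≤ M := by
      have := hM r ⟨hr0, hrR⟩; rwa [Real.norm_eq_abs] at this
    have hr1 : (0:ℝ) < r + 1 := by linarith
    have h2 : (r+1)^(e+1) ≤ (R₀+1)^(e+1) :=
      Real.rpow_le_rpow (by linarith) (by linarith) (by linarith)
    have h3 : (1:ℝ) ≤ (R₀+1)^(e+1) * (r+1)^(-e-1) := by
      rw [show -e-1 = -(e+1) by ring, Real.rpow_neg hr1.le, ← div_eq_mul_inv,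
        le_div_iff₀ (Real.rpow_pos_of_pos hr1 _)]
      simpa using h2
    calc |deriv u r| ≤ M := h1
      _ = M * 1 := (mul_one M).symm
      _ ≤ M * ((R₀+1)^(e+1) * (r+1)^(-e-1)) := mul_le_mul_of_nonneg_left h3 hM0
      _ = C₂ * (r+1)^(-e-1) := by rw [hC₂]; ring
  refine ⟨max C₁ C₂ + 1, ?_, ?_⟩
  · have := le_max_right C₁ C₂; linarith
  · intro r hr
    have hrpow : (0:ℝ) ≤ (r+1)^(-e-1) := Real.rpow_nonneg (by linarith) _
    rcases le_total r R₀ with h | h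
    · calc |deriv u r| ≤ C₂ * (r+1)^(-e-1) := hnear r hr h
        _ ≤ (max C₁ C₂ + 1) * (r+1)^(-e-1) := by
            apply mul_le_mul_of_nonneg_right _ hrpow
            have := le_max_right C₁ C₂; linarith
    · calc |deriv u r| ≤ C₁ * (r+1)^(-e-1) := hfar r h
        _ ≤ (max C₁ C₂ + 1) * (r+1)^(-e-1) := by
            apply mul_le_mul_of_nonneg_right _ hrpow
            have := le_max_left C₁ C₂; linarith
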